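/- In the general model, an allocation q is monopolist if and only if q solves the cap-constrained revenue problem 𝒫(q^M) for a quality q^M maximizing q̂ ↦ V(q̂) − c(q̂) over Q. -/

import Mathlib

open MeasureTheory Set Filter Topology

noncomputable section

/-- Partial derivative of `u` in the type argument. -/
def u2 (u : ℝ → ℝ → ℝ) (q θ : ℝ) : ℝ := deriv (fun s => u q s) θ

/-- Partial derivative of `u` in the quality argument. -/
def u1 (u : ℝ → ℝ → ℝ) (q θ : ℝ) : ℝ := deriv (fun s => u s θ) q

/-- The virtual surplus `J(q,θ) = u(q,θ) - (1-F(θ))/F'(θ) · u₂(q,θ) - k(q)`. -/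
def Jfun (F : ℝ → ℝ) (u : ℝ → ℝ → ℝ) (k : ℝ → ℝ) (q θ : ℝ) : ℝ :=
  u q θ - (1 - F θ) / deriv F θ * u2 u q θ - k q

/-- Partial derivative of the virtual surplus in the quality argument. -/
def J1 (F : ℝ → ℝ) (u : ℝ → ℝ → ℝ) (k : ℝ → ℝ) (q θ : ℝ) : ℝ :=
  deriv (fun s => Jfun F u k s θ) q

/-- Strict quasiconcavity on a set of reals. -/
def StrictQuasiconcaveOn (s : Set ℝ) (f : ℝ → ℝ) : Prop :=
  ∀ x ∈ s, ∀ y ∈ s, x ≠ y → ∀ t : ℝ, 0 < t → t < 1 →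
    min (f x) (f y) < f (t * x + (1 - t) * y)

/-- Standing hypotheses of the general model of the Appendix. -/
structure GenModel (qbar : ℝ) (F : ℝ → ℝ) (u : ℝ → ℝ → ℝ) (k c : ℝ → ℝ) : Prop where
  qbar_pos : 0 < qbar
  F_smooth : ContDiff ℝ 2 F
  F_zero : F 0 = 0
  F_one : F 1 = 1
  F_mono : Monotone F
  F_density_pos : ∀ θ ∈ Icc (0:ℝ) 1, 0 < deriv F θ
  u_smooth : ContDiff ℝ 2 (fun p : ℝ × ℝ => u p.1 p.2)
  u_incr_diff : ∀ q q' θ θ' : ℝ, q ≤ q' → θ ≤ θ' →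
    u q' θ - u q θ ≤ u q' θ' - u q θ'
  u_concave : ∀ θ ∈ Icc (0:ℝ) 1, ConcaveOn ℝ (Icc (0:ℝ) qbar) (fun q => u q θ)
  uk_strict_qc : ∃ S : Set ℝ, S.Countable ∧ ∀ θ ∈ Icc (0:ℝ) 1 \ S,
    StrictQuasiconcaveOn (Icc (0:ℝ) qbar) (fun q => u q θ - k q)
  k_convex : ConvexOn ℝ (Icc (0:ℝ) qbar) k
  k_smooth : ContDiff ℝ 2 k
  k_mono : MonotoneOn k (Icc (0:ℝ) qbar)
  c_mono : StrictMonoOn c (Icc (0:ℝ) qbar)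
  c_convex : StrictConvexOn ℝ (Icc (0:ℝ) qbar) c
  c_diff : ∀ q ∈ Icc (0:ℝ) qbar, DifferentiableAt ℝ c q
  J_incr_diff : ∀ q q' θ θ' : ℝ, q ≤ q' → θ ≤ θ' →
    Jfun F u k q' θ - Jfun F u k q θ ≤ Jfun F u k q' θ' - Jfun F u k q θ'
  J_concave : ∀ θ ∈ Icc (0:ℝ) 1, ConcaveOn ℝ (Icc (0:ℝ) qbar) (fun q => Jfun F u k q θ)
  J_strict_qc : ∃ S : Set ℝ, S.Countable ∧ ∀ θ ∈ Icc (0:ℝ) 1 \ S,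
    StrictQuasiconcaveOn (Icc (0:ℝ) qbar) (fun q => Jfun F u k q θ)
  c_boundary : ∃ L₀ L₁ : ℝ,
    Tendsto (fun q => (∫ θ in (0:ℝ)..1, J1 F u k q θ * deriv F θ) - deriv c q)
      (nhdsWithin 0 (Ioi 0)) (nhds L₀) ∧
    Tendsto (fun q => (∫ θ in (0:ℝ)..1, J1 F u k q θ * deriv F θ) - deriv c q)
      (nhdsWithin qbar (Iio qbar)) (nhds L₁) ∧ 0 < L₀ ∧ L₁ < 0

/-- An allocation in the general model: a measurable map from `Θ` into `Q = [0, qbar]`. -/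
def IsAllocG (qbar : ℝ) (q : ℝ → ℝ) : Prop :=
  Measurable q ∧ ∀ θ ∈ Icc (0:ℝ) 1, q θ ∈ Icc (0:ℝ) qbar

/-- Expected gross surplus of an allocation. -/
def objStar (F : ℝ → ℝ) (u : ℝ → ℝ → ℝ) (k : ℝ → ℝ) (q : ℝ → ℝ) : ℝ :=
  ∫ θ in (0:ℝ)..1, (u (q θ) θ - k (q θ)) * deriv F θ

/-- Total welfare of an allocation in the general model. -/
def WelfareG (F : ℝ → ℝ) (u : ℝ → ℝ → ℝ) (k c : ℝ → ℝ) (q : ℝ → ℝ) : ℝ :=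
  objStar F u k q - c (sSup (q '' Icc (0:ℝ) 1))

/-- Efficiency in the general model. -/
def EfficientG (qbar : ℝ) (F : ℝ → ℝ) (u : ℝ → ℝ → ℝ) (k c : ℝ → ℝ) (q : ℝ → ℝ) : Prop :=
  IsAllocG qbar q ∧ ∀ q' : ℝ → ℝ, IsAllocG qbar q' →
    WelfareG F u k c q' ≤ WelfareG F u k c q

/-- Feasibility for the cap-constrained welfare problem `𝒫⋆(qcap)`. -/
def FeasStar (qbar qcap : ℝ) (q : ℝ → ℝ) : Prop :=
  IsAllocG qbar q ∧ ∀ θ ∈ Icc (0:ℝ) 1, q θ ≤ qcap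

/-- The value `U(qcap)` of the cap-constrained welfare problem `𝒫⋆(qcap)`. -/
def Uval (qbar : ℝ) (F : ℝ → ℝ) (u : ℝ → ℝ → ℝ) (k : ℝ → ℝ) (qcap : ℝ) : ℝ :=
  sSup {v | ∃ q : ℝ → ℝ, FeasStar qbar qcap q ∧ v = objStar F u k q}

/-- Solving the cap-constrained welfare problem `𝒫⋆(qcap)`. -/
def SolvesStar (qbar : ℝ) (F : ℝ → ℝ) (u : ℝ → ℝ → ℝ) (k : ℝ → ℝ) (qcap : ℝ)
    (q : ℝ → ℝ) : Prop :=
  FeasStar qbar qcap q ∧ ∀ q' : ℝ → ℝ, FeasStar qbar qcap q' →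
    objStar F u k q' ≤ objStar F u k q

/-- Incentive compatibility and individual rationality in the general model. -/
def ICIRG (u : ℝ → ℝ → ℝ) (q t : ℝ → ℝ) : Prop :=
  ∀ θ ∈ Icc (0:ℝ) 1,
    (∀ θ' ∈ Icc (0:ℝ) 1, u (q θ') θ - t θ' ≤ u (q θ) θ - t θ) ∧ 0 ≤ u (q θ) θ - t θ

/-- Expected revenue of a transfer function. -/
def revenueG (F : ℝ → ℝ) (t : ℝ → ℝ) : ℝ := ∫ θ in (0:ℝ)..1, t θ * deriv F θ

/-- Profit of the seller in the general model. -/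
def profitG (F c : ℝ → ℝ) (q t : ℝ → ℝ) : ℝ :=
  revenueG F t - c (sSup (q '' Icc (0:ℝ) 1))

/-- Monopolist allocation in the general model. -/
def MonopolistG (qbar : ℝ) (F : ℝ → ℝ) (u : ℝ → ℝ → ℝ) (c : ℝ → ℝ) (q : ℝ → ℝ) : Prop :=
  ∃ t : ℝ → ℝ, IsAllocG qbar q ∧ ICIRG u q t ∧
    ∀ q' t' : ℝ → ℝ, IsAllocG qbar q' → ICIRG u q' t' →
      profitG F c q' t' ≤ profitG F c q t

/-- Feasibility for the cap-constrained revenue problem `𝒫(qcap)`. -/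
def FeasCapM (qbar : ℝ) (u : ℝ → ℝ → ℝ) (qcap : ℝ) (q t : ℝ → ℝ) : Prop :=
  IsAllocG qbar q ∧ ICIRG u q t ∧ ∀ θ ∈ Icc (0:ℝ) 1, q θ ≤ qcap

/-- The value `V(qcap)` of the cap-constrained revenue problem `𝒫(qcap)`. -/
def VvalG (qbar : ℝ) (F : ℝ → ℝ) (u : ℝ → ℝ → ℝ) (qcap : ℝ) : ℝ :=
  sSup {v | ∃ q t : ℝ → ℝ, FeasCapM qbar u qcap q t ∧ v = revenueG F t}

/-- Solving the cap-constrained revenue problem `𝒫(qcap)`. -/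
def SolvesCapM (qbar : ℝ) (F : ℝ → ℝ) (u : ℝ → ℝ → ℝ) (qcap : ℝ) (q : ℝ → ℝ) : Prop :=
  ∃ t : ℝ → ℝ, FeasCapM qbar u qcap q t ∧
    ∀ q' t' : ℝ → ℝ, FeasCapM qbar u qcap q' t' → revenueG F t' ≤ revenueG F t

/-- Generalized inverse of a (pointwise) maximizer selection. -/
def bof (β : ℝ → ℝ) (q : ℝ) : ℝ := sInf {θ ∈ Icc (0:ℝ) 1 | q ≤ β θ}

section Stmt9Helpers

variable {qbar : ℝ} {F : ℝ → ℝ} {u : ℝ → ℝ → ℝ} {k c : ℝ → ℝ}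

lemma sSup_image_mem_aux (hq : 0 < qbar) {q : ℝ → ℝ} (h : IsAllocG qbar q) :
    sSup (q '' Icc (0:ℝ) 1) ∈ Icc (0:ℝ) qbar := by
  have h01 : (0:ℝ) ∈ Icc (0:ℝ) 1 := by constructor <;> norm_num
  have hne : (q '' Icc (0:ℝ) 1).Nonempty := ⟨q 0, mem_image_of_mem _ h01⟩
  have hbdd : BddAbove (q '' Icc (0:ℝ) 1) :=
    ⟨qbar, fun x hx => by obtain ⟨θ, hθ, rfl⟩ := hx; exact (h.2 θ hθ).2⟩
  constructor
  · exact le_trans (h.2 0 h01).1 (le_csSup hbdd (mem_image_of_mem _ h01))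
  · exact csSup_le hne (fun x hx => by obtain ⟨θ, hθ, rfl⟩ := hx; exact (h.2 θ hθ).2)

lemma bddAbove_image_aux {q : ℝ → ℝ} (h : IsAllocG qbar q) :
    BddAbove (q '' Icc (0:ℝ) 1) :=
  ⟨qbar, fun x hx => by obtain ⟨θ, hθ, rfl⟩ := hx; exact (h.2 θ hθ).2⟩

lemma revenue_bdd_aux (hM : GenModel qbar F u k c) :
    ∃ M : ℝ, ∀ q t : ℝ → ℝ, IsAllocG qbar q → ICIRG u q t → revenueG F t ≤ M := by
  obtain ⟨p₀, hp₀, _, hmax⟩ :=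
    (isCompact_Icc.prod isCompact_Icc :
      IsCompact (Icc (0:ℝ) qbar ×ˢ Icc (0:ℝ) 1)).exists_sSup_image_eq_and_ge
      ⟨((0:ℝ),(0:ℝ)), by
        constructor
        · exact ⟨le_rfl, hM.qbar_pos.le⟩
        · constructor <;> norm_num⟩
      hM.u_smooth.continuous.continuousOn
  set B := u p₀.1 p₀.2 with hB
  refine ⟨max B 0, fun q t hq ht => ?_⟩
  by_cases hInt : IntervalIntegrable (fun θ => t θ * deriv F θ) volume 0 1
  · have hFc : Continuous (deriv F) := hM.F_smooth.continuous_deriv one_le_two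
    have hle : ∀ θ ∈ Icc (0:ℝ) 1, t θ * deriv F θ ≤ B * deriv F θ := by
      intro θ hθ
      have h1 : t θ ≤ u (q θ) θ := by linarith [(ht θ hθ).2]
      have h2 : u (q θ) θ ≤ B := hmax (q θ, θ) (Set.mk_mem_prod (hq.2 θ hθ) hθ)
      exact mul_le_mul_of_nonneg_right (h1.trans h2) (le_of_lt (hM.F_density_pos θ hθ))
    have hmono := intervalIntegral.integral_mono_on zero_le_one hInt
      ((continuous_const.mul hFc : Continuous fun θ => B * deriv F θ).intervalIntegrable 0 1) hle
    calc revenueG F t ≤ ∫ θ in (0:ℝ)..1, B * deriv F θ := hmono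
      _ = B * (F 1 - F 0) := by
          rw [intervalIntegral.integral_const_mul,
            intervalIntegral.integral_deriv_eq_sub
              (fun x _ => (hM.F_smooth.differentiable two_ne_zero).differentiableAt)
              (hFc.intervalIntegrable 0 1)]
      _ = B := by rw [hM.F_one, hM.F_zero]; ring
      _ ≤ max B 0 := le_max_left _ _
  · have : revenueG F t = 0 := intervalIntegral.integral_undef hInt
    rw [this]
    exact le_max_right _ _

lemma feas_nonempty_aux (hM : GenModel qbar F u k c) {qhat : ℝ}
    (h : qhat ∈ Icc (0:ℝ) qbar) :
    ∃ t : ℝ → ℝ, FeasCapM qbar u qhat (fun _ => 0) t := by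
  have hcont : Continuous (fun θ : ℝ => u 0 θ) :=
    hM.u_smooth.continuous.comp (Continuous.prodMk_right (0:ℝ))
  obtain ⟨θ₀, hθ₀, hmin⟩ := isCompact_Icc.exists_isMinOn
    (Set.nonempty_Icc.mpr zero_le_one) hcont.continuousOn
  refine ⟨fun _ => u 0 θ₀,
    ⟨measurable_const, fun θ _ => ⟨le_rfl, hM.qbar_pos.le⟩⟩, ?_, fun θ _ => h.1⟩
  intro θ hθ
  refine ⟨fun θ' _ => le_rfl, ?_⟩
  have h2 : u 0 θ₀ ≤ u 0 θ := hmin hθ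
  simp only
  linarith

end Stmt9Helpers

/-- Lemma A.2: monopolist decomposition in the general model.
An allocation is monopolist iff it solves the cap-constrained revenue problem
`𝒫(q^M)` for a quality `q^M` maximizing `q̂ ↦ V(q̂) - c(q̂)` over `Q`. -/
theorem stmt9 (qbar : ℝ) (F : ℝ → ℝ) (u : ℝ → ℝ → ℝ) (k c : ℝ → ℝ)
    (hM : GenModel qbar F u k c) (q : ℝ → ℝ) :
    MonopolistG qbar F u c q ↔
      ∃ qM ∈ Icc (0:ℝ) qbar,
        (∀ qhat ∈ Icc (0:ℝ) qbar,
          VvalG qbar F u qhat - c qhat ≤ VvalG qbar F u qM - c qM) ∧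
        SolvesCapM qbar F u qM q := by
  obtain ⟨M, hMbd⟩ := revenue_bdd_aux hM
  -- The set of revenues for cap qhat
  have hSbdd : ∀ qhat : ℝ,
      BddAbove {v | ∃ q2 t2 : ℝ → ℝ, FeasCapM qbar u qhat q2 t2 ∧ v = revenueG F t2} := by
    intro qhat
    refine ⟨M, fun v hv => ?_⟩
    obtain ⟨q2, t2, hf, rfl⟩ := hv
    exact hMbd q2 t2 hf.1 hf.2.1
  have hSne : ∀ qhat ∈ Icc (0:ℝ) qbar,
      {v | ∃ q2 t2 : ℝ → ℝ, FeasCapM qbar u qhat q2 t2 ∧ v = revenueG F t2}.Nonempty := by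
    intro qhat hqhat
    obtain ⟨t0, ht0⟩ := feas_nonempty_aux hM hqhat
    exact ⟨revenueG F t0, fun _ => 0, t0, ht0, rfl⟩
  have hVge : ∀ qhat : ℝ, ∀ q2 t2 : ℝ → ℝ, FeasCapM qbar u qhat q2 t2 →
      revenueG F t2 ≤ VvalG qbar F u qhat := by
    intro qhat q2 t2 hf
    exact le_csSup (hSbdd qhat) ⟨q2, t2, hf, rfl⟩
  have hcmono := hM.c_mono.monotoneOn
  constructor
  · rintro ⟨t, halloc, hicir, hopt⟩
    set qM := sSup (q '' Icc (0:ℝ) 1) with hqM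
    have hqMmem : qM ∈ Icc (0:ℝ) qbar := sSup_image_mem_aux hM.qbar_pos halloc
    have hcap : ∀ θ ∈ Icc (0:ℝ) 1, q θ ≤ qM := fun θ hθ =>
      le_csSup (bddAbove_image_aux halloc) (mem_image_of_mem _ hθ)
    have hfeasq : FeasCapM qbar u qM q t := ⟨halloc, hicir, hcap⟩
    have hprofit : profitG F c q t = revenueG F t - c qM := rfl
    have hkey : ∀ qhat ∈ Icc (0:ℝ) qbar, ∀ q2 t2 : ℝ → ℝ, FeasCapM qbar u qhat q2 t2 →
        revenueG F t2 - c qhat ≤ revenueG F t - c qM := by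
      intro qhat hqhat q2 t2 hf
      have hs2 : sSup (q2 '' Icc (0:ℝ) 1) ∈ Icc (0:ℝ) qbar :=
        sSup_image_mem_aux hM.qbar_pos hf.1
      have hs2le : sSup (q2 '' Icc (0:ℝ) 1) ≤ qhat :=
        csSup_le ⟨q2 0, mem_image_of_mem _ (by constructor <;> norm_num)⟩
          (fun x hx => by obtain ⟨θ, hθ, rfl⟩ := hx; exact hf.2.2 θ hθ)
      have hc2 : c (sSup (q2 '' Icc (0:ℝ) 1)) ≤ c qhat := hcmono hs2 hqhat hs2le
      have hp := hopt q2 t2 hf.1 hf.2.1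
      simp only [profitG] at hp
      linarith
    refine ⟨qM, hqMmem, ?_, t, hfeasq, ?_⟩
    · intro qhat hqhat
      have hVle : VvalG qbar F u qhat ≤ (revenueG F t - c qM) + c qhat := by
        refine csSup_le (hSne qhat hqhat) ?_
        rintro v ⟨q2, t2, hf, rfl⟩
        linarith [hkey qhat hqhat q2 t2 hf]
      have hVM : revenueG F t ≤ VvalG qbar F u qM := hVge qM q t hfeasq
      linarith
    · intro q2 t2 hf
      have := hkey qM hqMmem q2 t2 hf
      linarith
  · rintro ⟨qM, hqMmem, hopt, t, hfeasq, hrevmax⟩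
    have hVM : VvalG qbar F u qM = revenueG F t := by
      apply le_antisymm
      · refine csSup_le (hSne qM hqMmem) ?_
        rintro v ⟨q2, t2, hf, rfl⟩
        exact hrevmax q2 t2 hf
      · exact hVge qM q t hfeasq
    refine ⟨t, hfeasq.1, hfeasq.2.1, ?_⟩
    intro q2 t2 halloc2 hicir2
    set s2 := sSup (q2 '' Icc (0:ℝ) 1) with hs2def
    have hs2mem : s2 ∈ Icc (0:ℝ) qbar := sSup_image_mem_aux hM.qbar_pos halloc2
    have hfeas2 : FeasCapM qbar u s2 q2 t2 :=
      ⟨halloc2, hicir2, fun θ hθ =>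
        le_csSup (bddAbove_image_aux halloc2) (mem_image_of_mem _ hθ)⟩
    have h1 : revenueG F t2 ≤ VvalG qbar F u s2 := hVge s2 q2 t2 hfeas2
    have h2 : VvalG qbar F u s2 - c s2 ≤ VvalG qbar F u qM - c qM := hopt s2 hs2mem
    have hsq : sSup (q '' Icc (0:ℝ) 1) ≤ qM :=
      csSup_le ⟨q 0, mem_image_of_mem _ (by constructor <;> norm_num)⟩
        (fun x hx => by obtain ⟨θ, hθ, rfl⟩ := hx; exact hfeasq.2.2 θ hθ)
    have hcq : c (sSup (q '' Icc (0:ℝ) 1)) ≤ c qM :=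
      hcmono (sSup_image_mem_aux hM.qbar_pos hfeasq.1) hqMmem hsq
    simp only [profitG]
    linarith
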